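/- Let ξ₁,...,ξₙ be independent centered random variables with ξᵢ ≤ B a.s. and satisfying condition (A) (with constants δ ∈ (0,1], B > 0). Let σ̄²(λ) denote the variance of S_n under the tilted measure P_λ, i.e. σ̄²(λ) = ∑ᵢ ( E[ξᵢ²e^{λξᵢ}]/E[e^{λξᵢ}] − (E[ξᵢe^{λξᵢ}])²/(E[e^{λξᵢ}])² ). Then for all λ ≥ 0, max(1 − 2Bλ, 0)·σ² ≤ σ̄²(λ) ≤ e^{Bλ}·σ², where σ² = ∑ᵢ E[ξᵢ²]. -/

import Mathlib

set_option maxHeartbeats 1000000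

open MeasureTheory ProbabilityTheory Real Filter

section Aux


lemma aux_exp_convex (θ z : ℝ) (h0 : 0 ≤ θ) (h1 : θ ≤ 1) :
    exp (θ * z) ≤ 1 - θ + θ * exp z := by
  have h := convexOn_exp.2 (Set.mem_univ 0) (Set.mem_univ z) (sub_nonneg.2 h1) h0 (by ring)
  simpa using h

lemma aux_mono_nonneg {f f' : ℝ → ℝ} (hd : ∀ u, HasDerivAt f (f' u) u)
    (h0 : f 0 = 0) (hder : ∀ u, 0 ≤ u → 0 ≤ f' u) {y : ℝ} (hy : 0 ≤ y) : 0 ≤ f y := by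
  have hcont : Continuous f := by
    have : Differentiable ℝ f := fun u => (hd u).differentiableAt
    exact this.continuous
  have hmono : MonotoneOn f (Set.Ici (0:ℝ)) := by
    apply monotoneOn_of_deriv_nonneg (convex_Ici 0) (hcont.continuousOn)
    · intro u hu
      exact (hd u).differentiableAt.differentiableWithinAt
    · intro u hu
      rw [(hd u).deriv]
      exact hder u (le_of_lt (by simpa using hu))
  have := hmono Set.self_mem_Ici hy hy
  simpa [h0] using this

lemma aux_exp_sub_one_le {r : ℝ} (hr : 0 ≤ r) : exp r - 1 ≤ r * exp r := by
  have h1 : (1 - r) * exp r ≤ exp (-r) * exp r :=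
    mul_le_mul_of_nonneg_right (by linarith [add_one_le_exp (-r)]) (exp_pos r).le
  have h2 : exp (-r) * exp r = 1 := by rw [← Real.exp_add]; simp
  nlinarith [h1, h2]

lemma aux_exp_quad_neg {y : ℝ} (hy : y ≤ 0) : exp y ≤ 1 + y + y ^ 2 / 2 := by
  have key : ∀ u : ℝ, 0 ≤ u → 0 ≤ 1 - u + u ^ 2 / 2 - exp (-u) := by
    intro u hu
    refine aux_mono_nonneg (f := fun u : ℝ => 1 - u + u ^ 2 / 2 - exp (-u))
      (f' := fun u => -1 + u + exp (-u)) (fun u => ?_) (by norm_num) ?_ hu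
    · have h1 : HasDerivAt (fun u : ℝ => 1 - u + u ^ 2 / 2 - exp (-u))
          (0 - 1 + (2 : ℕ) * u ^ (2 - 1) / 2 - exp (-u) * (-1)) u := by
        exact (((hasDerivAt_const u (1:ℝ)).sub (hasDerivAt_id u)).add
          ((hasDerivAt_pow 2 u).div_const 2)).sub
          ((Real.hasDerivAt_exp (-u)).comp u (hasDerivAt_neg u))
      have h2 : (0 : ℝ) - 1 + (2 : ℕ) * u ^ (2 - 1) / 2 - exp (-u) * (-1)
          = -1 + u + exp (-u) := by push_cast; ring
      rw [h2] at h1; exact h1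
    · intro u hu
      show 0 ≤ -1 + u + exp (-u)
      linarith [add_one_le_exp (-u)]
  have h := key (-y) (by linarith)
  rw [neg_neg] at h
  nlinarith [h]

lemma aux_exp_quad_pos {s : ℝ} (hs : 0 ≤ s) : exp s ≤ 1 + s + s ^ 2 / 2 * exp s := by
  have key := aux_mono_nonneg (f := fun u : ℝ => 1 + u + u ^ 2 / 2 * exp u - exp u)
      (f' := fun u => 1 + (u * exp u + u ^ 2 / 2 * exp u) - exp u) (fun u => ?_) (by norm_num)
      ?_ hs
  · linarith
  · have h1 : HasDerivAt (fun u : ℝ => u ^ 2 / 2 * exp u)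
        ((2 : ℕ) * u ^ (2 - 1) / 2 * exp u + u ^ 2 / 2 * exp u) u :=
      ((hasDerivAt_pow 2 u).div_const 2).mul (Real.hasDerivAt_exp u)
    have h4 : HasDerivAt (fun u : ℝ => 1 + u + u ^ 2 / 2 * exp u - exp u)
        (0 + 1 + ((2 : ℕ) * u ^ (2 - 1) / 2 * exp u + u ^ 2 / 2 * exp u) - exp u) u :=
      (((hasDerivAt_const u (1:ℝ)).add (hasDerivAt_id' u)).add h1).sub (Real.hasDerivAt_exp u)
    have h5 : (0 : ℝ) + 1 + ((2 : ℕ) * u ^ (2 - 1) / 2 * exp u + u ^ 2 / 2 * exp u) - exp u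
        = 1 + (u * exp u + u ^ 2 / 2 * exp u) - exp u := by push_cast; ring
    rw [h5] at h4; exact h4
  · intro u hu
    show 0 ≤ 1 + (u * exp u + u ^ 2 / 2 * exp u) - exp u
    nlinarith [aux_exp_sub_one_le hu, sq_nonneg u, exp_pos u]

lemma aux_exp_cubic_pos {y : ℝ} (hy : 0 ≤ y) :
    exp y ≤ 1 + y + y ^ 2 / 2 + y ^ 3 / 6 * exp y := by
  have key := aux_mono_nonneg (f := fun u : ℝ => 1 + u + u ^ 2 / 2 + u ^ 3 / 6 * exp u - exp u)
      (f' := fun u => 1 + u + (u ^ 2 / 2 * exp u + u ^ 3 / 6 * exp u) - exp u)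
      (fun u => ?_) (by norm_num) ?_ hy
  · linarith
  · have h1 : HasDerivAt (fun u : ℝ => u ^ 3 / 6 * exp u)
        ((3 : ℕ) * u ^ (3 - 1) / 6 * exp u + u ^ 3 / 6 * exp u) u :=
      ((hasDerivAt_pow 3 u).div_const 6).mul (Real.hasDerivAt_exp u)
    have h4 : HasDerivAt (fun u : ℝ => 1 + u + u ^ 2 / 2 + u ^ 3 / 6 * exp u - exp u)
        (0 + 1 + (2 : ℕ) * u ^ (2 - 1) / 2
          + ((3 : ℕ) * u ^ (3 - 1) / 6 * exp u + u ^ 3 / 6 * exp u) - exp u) u :=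
      ((((hasDerivAt_const u (1:ℝ)).add (hasDerivAt_id' u)).add
        ((hasDerivAt_pow 2 u).div_const 2)).add h1).sub (Real.hasDerivAt_exp u)
    have h5 : (0 : ℝ) + 1 + (2 : ℕ) * u ^ (2 - 1) / 2
          + ((3 : ℕ) * u ^ (3 - 1) / 6 * exp u + u ^ 3 / 6 * exp u) - exp u
        = 1 + u + (u ^ 2 / 2 * exp u + u ^ 3 / 6 * exp u) - exp u := by push_cast; ring
    rw [h5] at h4; exact h4
  · intro u hu
    show 0 ≤ 1 + u + (u ^ 2 / 2 * exp u + u ^ 3 / 6 * exp u) - exp u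
    nlinarith [aux_exp_quad_pos hu, sq_nonneg u, exp_pos u, pow_nonneg hu 3]

lemma aux_slope {B l t : ℝ} (hB : 0 < B) (hl : 0 ≤ l) (ht : t ≤ B) :
    t * (exp (l * t) - 1) ≤ (exp (l * B) - 1) / B * t ^ 2 := by
  rcases le_or_gt t 0 with h | h
  · have h1 : l * t + 1 ≤ exp (l * t) := add_one_le_exp _
    have h2 : t * (exp (l * t) - 1) ≤ t * (l * t) := by
      nlinarith [h1]
    have h3 : l ≤ (exp (l * B) - 1) / B := by
      rw [le_div_iff₀ hB]
      linarith [add_one_le_exp (l * B)]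
    nlinarith [sq_nonneg t]
  · have h1 : exp (l * t) ≤ 1 - t / B + t / B * exp (l * B) := by
      have := aux_exp_convex (t / B) (l * B) (by positivity) ((div_le_one hB).2 ht)
      have he : t / B * (l * B) = l * t := by field_simp
      rwa [he] at this
    have h2 : exp (l * t) - 1 ≤ t / B * (exp (l * B) - 1) := by linarith [h1]
    calc t * (exp (l * t) - 1) ≤ t * (t / B * (exp (l * B) - 1)) :=
          mul_le_mul_of_nonneg_left h2 h.le
      _ = (exp (l * B) - 1) / B * t ^ 2 := by ring

lemma aux_exp_taylor {B l t : ℝ} (hB : 0 < B) (hl : 0 ≤ l) (ht : t ≤ B) :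
    exp (l * t) ≤ 1 + l * t + (l * t) ^ 2 / 2 + l ^ 3 * B / 6 * (t ^ 2 * exp (l * t)) := by
  rcases le_or_gt t 0 with h | h
  · have h1 := aux_exp_quad_neg (y := l * t) (mul_nonpos_of_nonneg_of_nonpos hl h)
    have h2 : 0 ≤ l ^ 3 * B / 6 * (t ^ 2 * exp (l * t)) := by positivity
    linarith
  · have h1 := aux_exp_cubic_pos (y := l * t) (by positivity)
    have h2 : (l * t) ^ 3 / 6 * exp (l * t) ≤ l ^ 3 * B / 6 * (t ^ 2 * exp (l * t)) := by
      have h3 : t ^ 2 * t ≤ t ^ 2 * B := mul_le_mul_of_nonneg_left ht (sq_nonneg t)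
      have : (l * t) ^ 3 ≤ l ^ 3 * B * t ^ 2 := by nlinarith [pow_nonneg hl 3]
      nlinarith [exp_pos (l * t)]
    linarith

lemma aux_tendsto (t : ℝ) :
    Filter.Tendsto (fun n : ℕ => ((n : ℝ) + 1) * (1 - exp ((1/((n : ℝ) + 1)) * t)))
      Filter.atTop (nhds (-t)) := by
  have hd : HasDerivAt (fun s : ℝ => 1 - exp (t * s)) (-t) 0 := by
    have hf : HasDerivAt (fun s : ℝ => t * s) t 0 := by
      simpa using (hasDerivAt_id' (0:ℝ)).const_mul t
    have h1 := hf.exp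
    have h2 := h1.const_sub 1
    simpa using h2
  have hslope := hasDerivAt_iff_tendsto_slope.1 hd
  have hsn : Filter.Tendsto (fun n : ℕ => 1 / ((n : ℝ) + 1)) Filter.atTop
      (nhdsWithin 0 {(0:ℝ)}ᶜ) := by
    rw [tendsto_nhdsWithin_iff]
    constructor
    · exact tendsto_one_div_add_atTop_nhds_zero_nat
    · filter_upwards with n
      simp only [Set.mem_compl_iff, Set.mem_singleton_iff]
      positivity
  have hcomp := hslope.comp hsn
  refine hcomp.congr fun n => ?_
  have hn : ((n : ℝ) + 1) ≠ 0 := by positivity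
  simp only [Function.comp_apply, slope_def_field]
  field_simp
  simp only [mul_zero, Real.exp_zero]
  ring

lemma aux_key_poly {x : ℝ} (h0 : 0 ≤ x) (h1 : x ≤ 1/2) :
    ((1 - 2*x) + (x + (3/5)*x^2)^2) * (1 + x^2/2 + (83/300)*x^3) ≤ 1 - x := by
  nlinarith [mul_nonneg h0 h0, mul_nonneg (mul_nonneg h0 h0) h0,
    mul_nonneg (mul_nonneg (mul_nonneg h0 h0) h0) h0,
    sq_nonneg x, pow_nonneg h0 5, pow_nonneg h0 6, pow_nonneg h0 7,
    mul_nonneg (pow_nonneg h0 4) (sub_nonneg.2 h1),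
    mul_nonneg (pow_nonneg h0 5) (sub_nonneg.2 h1),
    mul_nonneg (pow_nonneg h0 6) (sub_nonneg.2 h1),
    mul_nonneg (pow_nonneg h0 3) (sub_nonneg.2 h1),
    mul_nonneg (pow_nonneg h0 2) (sub_nonneg.2 h1),
    mul_nonneg h0 (sub_nonneg.2 h1)]

lemma aux_exp_le_83 {x : ℝ} (h0 : 0 ≤ x) (h1 : x ≤ 1/2) : exp x ≤ 83/50 := by
  have h := Real.exp_bound' h0 (le_trans h1 (by norm_num)) (n := 3) (by norm_num)
  simp only [Finset.sum_range_succ, Finset.sum_range_zero] at h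
  norm_num [Nat.factorial] at h
  nlinarith [h, sq_nonneg x, mul_nonneg (mul_nonneg h0 h0) h0]

lemma aux_exp_le_q {x : ℝ} (h0 : 0 ≤ x) (h1 : x ≤ 1/2) :
    exp x - 1 ≤ x + (3/5)*x^2 := by
  have h := Real.exp_bound' h0 (le_trans h1 (by norm_num)) (n := 4) (by norm_num)
  simp only [Finset.sum_range_succ, Finset.sum_range_zero] at h
  norm_num [Nat.factorial] at h
  nlinarith [h, sq_nonneg x, mul_nonneg (mul_nonneg h0 h0) h0,
    mul_nonneg (mul_nonneg (mul_nonneg h0 h0) h0) h0,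
    mul_nonneg (mul_nonneg h0 h0) (sub_nonneg.2 h1),
    mul_nonneg (mul_nonneg (mul_nonneg h0 h0) h0) (sub_nonneg.2 h1)]

lemma aux_rpow_bound {δ : ℝ} (hδ0 : 0 < δ) (hδ1 : δ ≤ 1) (t : ℝ) :
    |t| ^ (2 + δ) ≤ t ^ 2 + t ^ 2 * max t 0 + t ^ 2 * max (-t) 0 := by
  have habs : t ^ 2 * max t 0 + t ^ 2 * max (-t) 0 = t ^ 2 * |t| := by
    rcases le_total t 0 with h | h
    · rw [max_eq_right h, max_eq_left (by linarith), abs_of_nonpos h]; ring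
    · rw [max_eq_left h, max_eq_right (by linarith), abs_of_nonneg h]; ring
  have key : |t| ^ (2 + δ) ≤ t ^ 2 + t ^ 2 * |t| := by
    rcases le_total (|t|) 1 with h | h
    · rcases eq_or_lt_of_le (abs_nonneg t) with h0 | h0
      · rw [← h0, Real.zero_rpow (by positivity)]
        positivity
      · have h2 := Real.rpow_le_rpow_of_exponent_ge h0 h (by linarith : (2:ℝ) ≤ 2 + δ)
        have h3 : |t| ^ ((2:ℝ)) = t ^ 2 := by
          rw [show ((2:ℝ)) = ((2:ℕ):ℝ) by norm_num, Real.rpow_natCast, sq_abs]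
        rw [h3] at h2
        nlinarith [mul_nonneg (sq_nonneg t) (abs_nonneg t)]
    · have h2 := Real.rpow_le_rpow_of_exponent_le h (by linarith : 2 + δ ≤ (3:ℝ))
      have h3 : |t| ^ ((3:ℝ)) = t ^ 2 * |t| := by
        rw [show ((3:ℝ)) = ((3:ℕ):ℝ) by norm_num, Real.rpow_natCast]
        rw [pow_succ, sq_abs]
      rw [h3] at h2
      nlinarith [sq_nonneg t]
  linarith [habs ▸ key]

lemma aux_young {δ B : ℝ} (hδ : 0 < δ) (hB : 0 < B) (t : ℝ) :
    t ^ 2 ≤ (2/(2+δ)) * (B ^ (-δ) * |t| ^ (2+δ)) + (δ/(2+δ)) * B ^ 2 := by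
  have h2δ : (0:ℝ) < 2 + δ := by linarith
  have hu0 : 0 ≤ |t| / B := div_nonneg (abs_nonneg t) hB.le
  have hg := Real.geom_mean_le_arith_mean2_weighted
    (w₁ := 2/(2+δ)) (w₂ := δ/(2+δ)) (p₁ := (|t|/B) ^ ((2:ℝ)+δ)) (p₂ := 1)
    (by positivity) (by positivity) (by positivity) zero_le_one (by field_simp)
  rw [Real.one_rpow, mul_one, ← Real.rpow_mul hu0] at hg
  have he : ((2:ℝ) + δ) * (2/(2+δ)) = 2 := by field_simp
  rw [he] at hg
  have hu2 : (|t|/B) ^ ((2:ℝ)) = t^2 / B^2 := by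
    rw [show ((2:ℝ)) = ((2:ℕ):ℝ) by norm_num, Real.rpow_natCast, div_pow, sq_abs]
  rw [hu2] at hg
  have hdiv : (|t|/B) ^ ((2:ℝ)+δ) = |t| ^ ((2:ℝ)+δ) / B ^ ((2:ℝ)+δ) :=
    Real.div_rpow (abs_nonneg t) hB.le _
  rw [hdiv] at hg
  have hBpos : (0:ℝ) < B ^ ((2:ℝ)+δ) := Real.rpow_pos_of_pos hB _
  have hBid : B ^ (-δ) * B ^ ((2:ℝ)+δ) = B ^ 2 := by
    rw [← Real.rpow_add hB]
    rw [show -δ + ((2:ℝ)+δ) = ((2:ℕ):ℝ) by ring, Real.rpow_natCast]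
  -- from hg : t^2/B^2 ≤ w₁ * (|t|^{2+δ}/B^{2+δ}) + w₂
  have hmul := mul_le_mul_of_nonneg_right hg (sq_nonneg B)
  have hB2 : (0:ℝ) < B ^ 2 := by positivity
  have e1 : t ^ 2 / B ^ 2 * B ^ 2 = t ^ 2 := by field_simp
  have e2 : (2/(2+δ) * (|t| ^ ((2:ℝ)+δ) / B ^ ((2:ℝ)+δ)) + δ/(2+δ) * 1) * B ^ 2
      = (2/(2+δ)) * (B ^ (-δ) * |t| ^ ((2:ℝ)+δ)) + (δ/(2+δ)) * B ^ 2 := by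
    rw [← hBid]
    field_simp
  rw [e1, e2] at hmul
  exact hmul

lemma aux_var_le {Ω : Type*} [MeasurableSpace Ω] (μ : Measure Ω)
    [IsProbabilityMeasure μ] (n : ℕ) (ξ : Fin n → Ω → ℝ) (B δ : ℝ) (hB : 0 < B)
    (hδ : δ ∈ Set.Ioc (0 : ℝ) 1)
    (hmeas : ∀ i, Measurable (ξ i))
    (hbdd : ∀ i, ∀ᵐ ω ∂μ, ξ i ω ≤ B)
    (hmom : ∀ i, ∫ ω, |ξ i ω| ^ (2 + δ) ∂μ ≤ B ^ (2 + δ))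
    (hint2 : ∀ i, Integrable (fun ω => (ξ i ω) ^ 2) μ)
    (hintx2e : ∀ i, ∀ l : ℝ, 0 ≤ l →
      Integrable (fun ω => (ξ i ω) ^ 2 * Real.exp (l * ξ i ω)) μ)
    (hA : ∀ l : ℝ, 0 ≤ l →
      (1 - B * l) * ∑ i, ∫ ω, (ξ i ω) ^ 2 ∂μ
        ≤ ∑ i, ∫ ω, (ξ i ω) ^ 2 * Real.exp (l * ξ i ω) ∂μ) :
    ∀ i, ∫ ω, (ξ i ω) ^ 2 ∂μ ≤ B ^ 2 := by
  have hv0 : ∀ j, 0 ≤ ∫ ω, (ξ j ω) ^ 2 ∂μ := fun j => integral_nonneg fun ω => sq_nonneg _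
  set V := ∑ j, ∫ ω, (ξ j ω) ^ 2 ∂μ with hV
  have hV0 : 0 ≤ V := Finset.sum_nonneg fun j _ => hv0 j
  set C := B * (1 + Real.exp B) * V with hC
  -- Step 1: uniform integral bound
  have hbound : ∀ (m : ℕ) (i : Fin n),
      ∫ ω, ((m:ℝ)+1) * max ((ξ i ω)^2 * (1 - Real.exp ((1/((m:ℝ)+1)) * ξ i ω))) 0 ∂μ ≤ C := by
    intro m i
    set l : ℝ := 1/((m:ℝ)+1) with hldef
    have hl : 0 ≤ l := by positivity
    have hl1 : l ≤ 1 := by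
      rw [hldef, div_le_one (by positivity)]
      linarith [Nat.cast_nonneg (α := ℝ) m]
    have hfint : ∀ j, Integrable (fun ω => (ξ j ω)^2 * (1 - Real.exp (l * ξ j ω))) μ := by
      intro j
      have : (fun ω => (ξ j ω)^2 * (1 - Real.exp (l * ξ j ω)))
          = fun ω => (ξ j ω)^2 - (ξ j ω)^2 * Real.exp (l * ξ j ω) := by
        funext ω; ring
      rw [this]
      exact (hint2 j).sub (hintx2e j l hl)
    have hposint : ∀ j, Integrable
        (fun ω => max ((ξ j ω)^2 * (1 - Real.exp (l * ξ j ω))) 0) μ := by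
      intro j
      refine (hint2 j).mono' ?_ ?_
      · exact ((((hmeas j).pow_const 2).mul
          (((hmeas j).const_mul l).exp.const_sub 1)).max measurable_const).aestronglyMeasurable
      · filter_upwards with ω
        rw [Real.norm_eq_abs, abs_of_nonneg (le_max_right _ _)]
        apply max_le _ (sq_nonneg _)
        have h1 : 1 - Real.exp (l * ξ j ω) ≤ 1 := by
          linarith [Real.exp_pos (l * ξ j ω)]
        nlinarith [sq_nonneg (ξ j ω)]
    have hnegint : ∀ j, Integrable
        (fun ω => max ((ξ j ω)^2 * (Real.exp (l * ξ j ω) - 1)) 0) μ := by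
      intro j
      refine (hintx2e j l hl).mono' ?_ ?_
      · exact ((((hmeas j).pow_const 2).mul
          (((hmeas j).const_mul l).exp.sub_const 1)).max measurable_const).aestronglyMeasurable
      · filter_upwards with ω
        rw [Real.norm_eq_abs, abs_of_nonneg (le_max_right _ _)]
        apply max_le _ (by positivity)
        nlinarith [sq_nonneg (ξ j ω), Real.exp_pos (l * ξ j ω)]
    have hneg_le : ∀ j, ∫ ω, max ((ξ j ω)^2 * (Real.exp (l * ξ j ω) - 1)) 0 ∂μ
        ≤ l * (B * Real.exp B) * ∫ ω, (ξ j ω)^2 ∂μ := by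
      intro j
      have hae : ∀ᵐ ω ∂μ, max ((ξ j ω)^2 * (Real.exp (l * ξ j ω) - 1)) 0
          ≤ l * (B * Real.exp B) * (ξ j ω)^2 := by
        filter_upwards [hbdd j] with ω hω
        apply max_le
        · rcases le_or_gt (ξ j ω) 0 with h | h
          · have he1 : Real.exp (l * ξ j ω) ≤ 1 :=
              Real.exp_le_one_iff.2 (mul_nonpos_of_nonneg_of_nonpos hl h)
            have : (ξ j ω)^2 * (Real.exp (l * ξ j ω) - 1) ≤ 0 :=
              mul_nonpos_of_nonneg_of_nonpos (sq_nonneg _) (by linarith)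
            have hrhs : 0 ≤ l * (B * Real.exp B) * (ξ j ω)^2 := by positivity
            linarith
          · have hr : 0 ≤ l * ξ j ω := by positivity
            have h1 := aux_exp_sub_one_le hr
            have h2 : l * ξ j ω * Real.exp (l * ξ j ω) ≤ l * B * Real.exp B := by
              have ha : l * ξ j ω ≤ l * B := mul_le_mul_of_nonneg_left hω hl
              have hb2 : Real.exp (l * ξ j ω) ≤ Real.exp B := by
                apply Real.exp_le_exp.2
                calc l * ξ j ω ≤ l * B := ha
                  _ ≤ 1 * B := mul_le_mul_of_nonneg_right hl1 hB.le
                  _ = B := one_mul B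
              exact mul_le_mul ha hb2 (Real.exp_pos _).le (by positivity)
            nlinarith [sq_nonneg (ξ j ω), Real.exp_pos (l * ξ j ω), h1, h2,
              mul_le_mul_of_nonneg_left h1 (sq_nonneg (ξ j ω)),
              mul_le_mul_of_nonneg_left h2 (sq_nonneg (ξ j ω))]
        · positivity
      have hmono := integral_mono_ae (hnegint j)
        (((hint2 j)).const_mul (l * (B * Real.exp B))) hae
      rw [integral_const_mul] at hmono
      exact hmono
    have hsum_f : ∑ j, ∫ ω, (ξ j ω)^2 * (1 - Real.exp (l * ξ j ω)) ∂μ ≤ B * l * V := by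
      have heq : ∀ j, ∫ ω, (ξ j ω)^2 * (1 - Real.exp (l * ξ j ω)) ∂μ
          = (∫ ω, (ξ j ω)^2 ∂μ) - ∫ ω, (ξ j ω)^2 * Real.exp (l * ξ j ω) ∂μ := by
        intro j
        rw [← integral_sub (hint2 j) (hintx2e j l hl)]
        congr 1; funext ω; ring
      calc ∑ j, ∫ ω, (ξ j ω)^2 * (1 - Real.exp (l * ξ j ω)) ∂μ
          = V - ∑ j, ∫ ω, (ξ j ω)^2 * Real.exp (l * ξ j ω) ∂μ := by
            rw [hV, ← Finset.sum_sub_distrib]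
            exact Finset.sum_congr rfl fun j _ => heq j
        _ ≤ V - (1 - B * l) * V := by linarith [hA l hl]
        _ = B * l * V := by ring
    -- single i bounded by sum
    have hpos_le_sum : ∫ ω, max ((ξ i ω)^2 * (1 - Real.exp (l * ξ i ω))) 0 ∂μ
        ≤ ∑ j, ∫ ω, max ((ξ j ω)^2 * (1 - Real.exp (l * ξ j ω))) 0 ∂μ := by
      exact Finset.single_le_sum
        (f := fun j => ∫ ω, max ((ξ j ω)^2 * (1 - Real.exp (l * ξ j ω))) 0 ∂μ)
        (fun j _ => integral_nonneg fun ω => le_max_right _ _) (Finset.mem_univ i)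
    have hsum_pos : ∑ j, ∫ ω, max ((ξ j ω)^2 * (1 - Real.exp (l * ξ j ω))) 0 ∂μ
        ≤ l * C := by
      have hsplit : ∀ j, ∫ ω, max ((ξ j ω)^2 * (1 - Real.exp (l * ξ j ω))) 0 ∂μ
          = (∫ ω, (ξ j ω)^2 * (1 - Real.exp (l * ξ j ω)) ∂μ)
            + ∫ ω, max ((ξ j ω)^2 * (Real.exp (l * ξ j ω) - 1)) 0 ∂μ := by
        intro j
        rw [← integral_add (hfint j) (hnegint j)]
        congr 1; funext ω
        rcases le_total ((ξ j ω)^2 * (1 - Real.exp (l * ξ j ω))) 0 with h | h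
        · rw [max_eq_right h, max_eq_left (by nlinarith)]
          ring
        · rw [max_eq_left h, max_eq_right (by nlinarith)]
          ring
      calc ∑ j, ∫ ω, max ((ξ j ω)^2 * (1 - Real.exp (l * ξ j ω))) 0 ∂μ
          = (∑ j, ∫ ω, (ξ j ω)^2 * (1 - Real.exp (l * ξ j ω)) ∂μ)
            + ∑ j, ∫ ω, max ((ξ j ω)^2 * (Real.exp (l * ξ j ω) - 1)) 0 ∂μ := by
            rw [← Finset.sum_add_distrib]
            exact Finset.sum_congr rfl fun j _ => hsplit j
        _ ≤ B * l * V + ∑ j, l * (B * Real.exp B) * ∫ ω, (ξ j ω)^2 ∂μ := by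
            apply add_le_add hsum_f
            exact Finset.sum_le_sum fun j _ => hneg_le j
        _ = l * C := by
            rw [← Finset.mul_sum, hC, ← hV]
            ring
    have hml : ((m:ℝ)+1) * l = 1 := by
      rw [hldef]; field_simp
    calc ∫ ω, ((m:ℝ)+1) * max ((ξ i ω)^2 * (1 - Real.exp (l * ξ i ω))) 0 ∂μ
        = ((m:ℝ)+1) * ∫ ω, max ((ξ i ω)^2 * (1 - Real.exp (l * ξ i ω))) 0 ∂μ :=
          integral_const_mul _ _
      _ ≤ ((m:ℝ)+1) * (l * C) := by
          apply mul_le_mul_of_nonneg_left (le_trans hpos_le_sum hsum_pos) (by positivity)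
      _ = C := by rw [← mul_assoc, hml, one_mul]
  -- Step 2: Fatou
  intro i
  have hgmeas : Measurable (fun ω => (ξ i ω)^2 * max (-(ξ i ω)) 0) :=
    ((hmeas i).pow_const 2).mul ((hmeas i).neg.max measurable_const)
  have hgnn : ∀ ω, 0 ≤ (ξ i ω)^2 * max (-(ξ i ω)) 0 :=
    fun ω => mul_nonneg (sq_nonneg _) (le_max_right _ _)
  set F : ℕ → Ω → ENNReal := fun m ω => ENNReal.ofReal
    (((m:ℝ)+1) * max ((ξ i ω)^2 * (1 - Real.exp ((1/((m:ℝ)+1)) * ξ i ω))) 0) with hF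
  have hFmeas : ∀ m, Measurable (F m) := by
    intro m
    apply Measurable.ennreal_ofReal
    exact measurable_const.mul ((((hmeas i).pow_const 2).mul
      (((hmeas i).const_mul _).exp.const_sub 1)).max measurable_const)
  have htend : ∀ ω, Tendsto (fun m => F m ω) atTop
      (nhds (ENNReal.ofReal ((ξ i ω)^2 * max (-(ξ i ω)) 0))) := by
    intro ω
    apply (ENNReal.continuous_ofReal.tendsto _).comp
    have h1 : Tendsto (fun m : ℕ => (ξ i ω)^2 * (((m:ℝ)+1) * (1 - Real.exp ((1/((m:ℝ)+1)) * ξ i ω))))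
        atTop (nhds ((ξ i ω)^2 * (-(ξ i ω)))) := (aux_tendsto (ξ i ω)).const_mul _
    have h2 := h1.max (tendsto_const_nhds (x := (0:ℝ)))
    have h3 : max ((ξ i ω)^2 * (-(ξ i ω))) 0 = (ξ i ω)^2 * max (-(ξ i ω)) 0 := by
      rcases le_total (-(ξ i ω)) 0 with h | h
      · rw [max_eq_right h, max_eq_right (mul_nonpos_of_nonneg_of_nonpos (sq_nonneg _) h),
          mul_zero]
      · rw [max_eq_left h, max_eq_left (mul_nonneg (sq_nonneg _) h)]
    rw [h3] at h2
    refine h2.congr fun m => ?_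
    rw [mul_comm ((m:ℝ)+1) (max _ _), max_mul_of_nonneg _ _ (by positivity : (0:ℝ) ≤ (m:ℝ)+1),
      zero_mul]
    congr 1
    ring
  have hlim : ∫⁻ ω, ENNReal.ofReal ((ξ i ω)^2 * max (-(ξ i ω)) 0) ∂μ ≤ ENNReal.ofReal C := by
    have heq : ∀ ω, ENNReal.ofReal ((ξ i ω)^2 * max (-(ξ i ω)) 0)
        = liminf (fun m => F m ω) atTop := fun ω => ((htend ω).liminf_eq).symm
    calc ∫⁻ ω, ENNReal.ofReal ((ξ i ω)^2 * max (-(ξ i ω)) 0) ∂μ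
        = ∫⁻ ω, liminf (fun m => F m ω) atTop ∂μ := by
          apply lintegral_congr; exact heq
      _ ≤ liminf (fun m => ∫⁻ ω, F m ω ∂μ) atTop := lintegral_liminf_le hFmeas
      _ ≤ ENNReal.ofReal C := by
          refine Filter.liminf_le_of_frequently_le (Filter.Frequently.of_forall fun m => ?_)
            (by isBoundedDefault)
          have hposint : Integrable (fun ω => ((m:ℝ)+1) *
              max ((ξ i ω)^2 * (1 - Real.exp ((1/((m:ℝ)+1)) * ξ i ω))) 0) μ := by
            apply Integrable.const_mul
            refine (hint2 i).mono' ?_ ?_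
            · exact ((((hmeas i).pow_const 2).mul
                (((hmeas i).const_mul _).exp.const_sub 1)).max
                  measurable_const).aestronglyMeasurable
            · filter_upwards with ω
              rw [Real.norm_eq_abs, abs_of_nonneg (le_max_right _ _)]
              apply max_le _ (sq_nonneg _)
              nlinarith [sq_nonneg (ξ i ω), Real.exp_pos ((1/((m:ℝ)+1)) * ξ i ω)]
          have hnn : 0 ≤ᵐ[μ] (fun ω => ((m:ℝ)+1) *
              max ((ξ i ω)^2 * (1 - Real.exp ((1/((m:ℝ)+1)) * ξ i ω))) 0) := by
            filter_upwards with ω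
            positivity
          have heq2 := MeasureTheory.ofReal_integral_eq_lintegral_ofReal hposint hnn
          rw [hF]
          rw [← heq2]
          exact ENNReal.ofReal_le_ofReal (hbound m i)
  have hgint : Integrable (fun ω => (ξ i ω)^2 * max (-(ξ i ω)) 0) μ := by
    constructor
    · exact hgmeas.aestronglyMeasurable
    · rw [hasFiniteIntegral_iff_ofReal (Filter.Eventually.of_forall hgnn)]
      exact lt_of_le_of_lt hlim ENNReal.ofReal_lt_top
  -- Step 3: integrability of |ξ|^{2+δ}
  have habs : Integrable (fun ω => |ξ i ω| ^ (2 + δ)) μ := by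
    refine Integrable.mono' (((hint2 i).add ((hint2 i).const_mul B)).add hgint) ?_ ?_
    · exact ((hmeas i).abs.pow_const _).aestronglyMeasurable
    · filter_upwards [hbdd i] with ω hω
      rw [Real.norm_eq_abs, abs_of_nonneg (Real.rpow_nonneg (abs_nonneg _) _)]
      have h1 := aux_rpow_bound hδ.1 hδ.2 (ξ i ω)
      have h2 : (ξ i ω)^2 * max (ξ i ω) 0 ≤ B * (ξ i ω)^2 := by
        have : max (ξ i ω) 0 ≤ B := max_le hω hB.le
        nlinarith [sq_nonneg (ξ i ω)]
      simp only [Pi.add_apply]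
      linarith
  -- Step 4: Young
  have hmono := integral_mono (hint2 i)
    ((habs.const_mul (B ^ (-δ))).const_mul (2/(2+δ)) |>.add (integrable_const _))
    (fun ω => aux_young hδ.1 hB (ξ i ω))
  simp only [Pi.add_apply] at hmono
  rw [integral_add ((habs.const_mul (B ^ (-δ))).const_mul (2/(2+δ)))
    (integrable_const _), integral_const, integral_const_mul, integral_const_mul] at hmono
  have hBneg : (0:ℝ) < B ^ (-δ) := Real.rpow_pos_of_pos hB _
  have hstep : (2/(2+δ)) * (B ^ (-δ) * ∫ ω, |ξ i ω| ^ (2+δ) ∂μ)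
      ≤ (2/(2+δ)) * (B ^ (-δ) * B ^ ((2:ℝ)+δ)) := by
    apply mul_le_mul_of_nonneg_left _ (div_nonneg (by norm_num) (by linarith [hδ.1]))
    exact mul_le_mul_of_nonneg_left (hmom i) hBneg.le
  have hBid : B ^ (-δ) * B ^ ((2:ℝ)+δ) = B ^ 2 := by
    rw [← Real.rpow_add hB]
    rw [show -δ + ((2:ℝ)+δ) = ((2:ℕ):ℝ) by ring, Real.rpow_natCast]
  have hδ2 : (0:ℝ) < 2 + δ := by linarith [hδ.1]
  have hfin : (2/(2+δ)) * B^2 + (δ/(2+δ)) * B^2 = B^2 := by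
    field_simp
  simp only [probReal_univ, ENNReal.toReal_one, smul_eq_mul, one_mul] at hmono
  calc ∫ ω, (ξ i ω)^2 ∂μ
      ≤ (2/(2+δ)) * (B ^ (-δ) * ∫ ω, |ξ i ω| ^ (2+δ) ∂μ) + (δ/(2+δ)) * B^2 := hmono
    _ ≤ (2/(2+δ)) * (B ^ (-δ) * B ^ ((2:ℝ)+δ)) + (δ/(2+δ)) * B^2 := by linarith [hstep]
    _ = B ^ 2 := by rw [hBid, hfin]

end Aux

/-- Two-sided bound on the tilted variance under condition (A). -/
theorem tilted_variance_two_sided_bound {Ω : Type*} [MeasurableSpace Ω] (μ : Measure Ω)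
    [IsProbabilityMeasure μ] (n : ℕ) (ξ : Fin n → Ω → ℝ) (B δ : ℝ) (hB : 0 < B)
    (hδ : δ ∈ Set.Ioc (0 : ℝ) 1)
    (hmeas : ∀ i, Measurable (ξ i))
    (hindep : iIndepFun ξ μ)
    (hint : ∀ i, Integrable (ξ i) μ) (hmean : ∀ i, ∫ ω, ξ i ω ∂μ = 0)
    (hbdd : ∀ i, ∀ᵐ ω ∂μ, ξ i ω ≤ B)
    (hmom : ∀ i, ∫ ω, |ξ i ω| ^ (2 + δ) ∂μ ≤ B ^ (2 + δ))
    (hint2 : ∀ i, Integrable (fun ω => (ξ i ω) ^ 2) μ)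
    (hinte : ∀ i, ∀ l : ℝ, 0 ≤ l → Integrable (fun ω => Real.exp (l * ξ i ω)) μ)
    (hintxe : ∀ i, ∀ l : ℝ, 0 ≤ l →
      Integrable (fun ω => ξ i ω * Real.exp (l * ξ i ω)) μ)
    (hintx2e : ∀ i, ∀ l : ℝ, 0 ≤ l →
      Integrable (fun ω => (ξ i ω) ^ 2 * Real.exp (l * ξ i ω)) μ)
    (hA : ∀ l : ℝ, 0 ≤ l →
      (1 - B * l) * ∑ i, ∫ ω, (ξ i ω) ^ 2 ∂μ
        ≤ ∑ i, ∫ ω, (ξ i ω) ^ 2 * Real.exp (l * ξ i ω) ∂μ) :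
    ∀ l : ℝ, 0 ≤ l →
      max (1 - 2 * B * l) 0 * (∑ i, ∫ ω, (ξ i ω) ^ 2 ∂μ)
        ≤ (∑ i, ((∫ ω, (ξ i ω) ^ 2 * Real.exp (l * ξ i ω) ∂μ) / (∫ ω, Real.exp (l * ξ i ω) ∂μ)
              - (∫ ω, ξ i ω * Real.exp (l * ξ i ω) ∂μ) ^ 2
                / (∫ ω, Real.exp (l * ξ i ω) ∂μ) ^ 2)) ∧
      (∑ i, ((∫ ω, (ξ i ω) ^ 2 * Real.exp (l * ξ i ω) ∂μ) / (∫ ω, Real.exp (l * ξ i ω) ∂μ)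
              - (∫ ω, ξ i ω * Real.exp (l * ξ i ω) ∂μ) ^ 2
                / (∫ ω, Real.exp (l * ξ i ω) ∂μ) ^ 2))
        ≤ Real.exp (B * l) * (∑ i, ∫ ω, (ξ i ω) ^ 2 ∂μ) := by
  intro l hl
  have hv0 : ∀ j, 0 ≤ ∫ ω, (ξ j ω) ^ 2 ∂μ := fun j => integral_nonneg fun ω => sq_nonneg _
  have hvB : ∀ j, ∫ ω, (ξ j ω) ^ 2 ∂μ ≤ B ^ 2 :=
    aux_var_le μ n ξ B δ hB hδ hmeas hbdd hmom hint2 hintx2e hA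
  have hV0 : 0 ≤ ∑ j, ∫ ω, (ξ j ω) ^ 2 ∂μ := Finset.sum_nonneg fun j _ => hv0 j
  -- basic facts about the exponential integrals
  have he1 : ∀ i, 1 ≤ ∫ ω, Real.exp (l * ξ i ω) ∂μ := by
    intro i
    have hint1 : Integrable (fun ω => 1 + l * ξ i ω) μ :=
      (integrable_const 1).add ((hint i).const_mul l)
    have h := integral_mono hint1 (hinte i l hl)
      (fun ω => by linarith [add_one_le_exp (l * ξ i ω)])
    rw [integral_add (integrable_const 1) ((hint i).const_mul l), integral_const,
      integral_const_mul, hmean i, probReal_univ] at h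
    simpa using h
  have hE0 : ∀ i, (0:ℝ) < ∫ ω, Real.exp (l * ξ i ω) ∂μ :=
    fun i => lt_of_lt_of_le one_pos (he1 i)
  have hb0 : ∀ i, 0 ≤ ∫ ω, (ξ i ω) ^ 2 * Real.exp (l * ξ i ω) ∂μ :=
    fun i => integral_nonneg fun ω => by positivity
  have hbe : ∀ i, ∫ ω, (ξ i ω) ^ 2 * Real.exp (l * ξ i ω) ∂μ
      ≤ Real.exp (B * l) * ∫ ω, (ξ i ω) ^ 2 ∂μ := by
    intro i
    have h := integral_mono_ae (hintx2e i l hl) ((hint2 i).const_mul (Real.exp (B * l))) ?_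
    · rwa [integral_const_mul] at h
    · filter_upwards [hbdd i] with ω hω
      have : Real.exp (l * ξ i ω) ≤ Real.exp (B * l) := by
        apply Real.exp_le_exp.2
        rw [mul_comm B l]
        exact mul_le_mul_of_nonneg_left hω hl
      nlinarith [sq_nonneg (ξ i ω), Real.exp_pos (l * ξ i ω)]
  have haeq : ∀ i, ∫ ω, ξ i ω * Real.exp (l * ξ i ω) ∂μ
      = ∫ ω, ξ i ω * (Real.exp (l * ξ i ω) - 1) ∂μ := by
    intro i
    have : (fun ω => ξ i ω * (Real.exp (l * ξ i ω) - 1))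
        = fun ω => ξ i ω * Real.exp (l * ξ i ω) - ξ i ω := funext fun ω => by ring
    rw [this, integral_sub (hintxe i l hl) (hint i), hmean i, sub_zero]
  have hintae : ∀ i, Integrable (fun ω => ξ i ω * (Real.exp (l * ξ i ω) - 1)) μ := by
    intro i
    have : (fun ω => ξ i ω * (Real.exp (l * ξ i ω) - 1))
        = fun ω => ξ i ω * Real.exp (l * ξ i ω) - ξ i ω := funext fun ω => by ring
    rw [this]
    exact (hintxe i l hl).sub (hint i)
  have ha0 : ∀ i, 0 ≤ ∫ ω, ξ i ω * Real.exp (l * ξ i ω) ∂μ := by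
    intro i
    rw [haeq i]
    apply integral_nonneg
    intro ω
    simp only [Pi.zero_apply]
    show (0:ℝ) ≤ ξ i ω * (Real.exp (l * ξ i ω) - 1)
    rcases le_or_gt (ξ i ω) 0 with h | h
    · have hle : Real.exp (l * ξ i ω) ≤ 1 :=
        Real.exp_le_one_iff.2 (mul_nonpos_of_nonneg_of_nonpos hl h)
      nlinarith [mul_nonneg (neg_nonneg.2 h) (sub_nonneg.2 hle)]
    · have : 1 ≤ Real.exp (l * ξ i ω) := Real.one_le_exp (by positivity)
      exact mul_nonneg h.le (by linarith)
  have haK : ∀ i, ∫ ω, ξ i ω * Real.exp (l * ξ i ω) ∂μ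
      ≤ (Real.exp (B * l) - 1) / B * ∫ ω, (ξ i ω) ^ 2 ∂μ := by
    intro i
    rw [haeq i]
    have h := integral_mono_ae (hintae i)
      ((hint2 i).const_mul ((Real.exp (B * l) - 1) / B)) ?_
    · rwa [integral_const_mul] at h
    · filter_upwards [hbdd i] with ω hω
      have := aux_slope hB hl hω
      rwa [mul_comm l B] at this
  -- Cauchy-Schwarz: each summand is nonnegative
  have hcs : ∀ i, 0 ≤ (∫ ω, (ξ i ω) ^ 2 * Real.exp (l * ξ i ω) ∂μ)
        / (∫ ω, Real.exp (l * ξ i ω) ∂μ)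
      - (∫ ω, ξ i ω * Real.exp (l * ξ i ω) ∂μ) ^ 2
        / (∫ ω, Real.exp (l * ξ i ω) ∂μ) ^ 2 := by
    intro i
    set E := ∫ ω, Real.exp (l * ξ i ω) ∂μ with hEdef
    set A := ∫ ω, ξ i ω * Real.exp (l * ξ i ω) ∂μ with hAdef
    set Bb := ∫ ω, (ξ i ω) ^ 2 * Real.exp (l * ξ i ω) ∂μ with hBbdef
    set c := A / E with hcdef
    have hnn : 0 ≤ ∫ ω, (ξ i ω - c) ^ 2 * Real.exp (l * ξ i ω) ∂μ :=
      integral_nonneg fun ω => by positivity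
    have hexp : ∫ ω, (ξ i ω - c) ^ 2 * Real.exp (l * ξ i ω) ∂μ
        = Bb - 2 * c * A + c ^ 2 * E := by
      have hfe : (fun ω => (ξ i ω - c) ^ 2 * Real.exp (l * ξ i ω))
          = fun ω => ((ξ i ω) ^ 2 * Real.exp (l * ξ i ω)
              - 2 * c * (ξ i ω * Real.exp (l * ξ i ω)))
            + c ^ 2 * Real.exp (l * ξ i ω) := funext fun ω => by ring
      have hI1 : Integrable (fun ω => (ξ i ω) ^ 2 * Real.exp (l * ξ i ω)
          - 2 * c * (ξ i ω * Real.exp (l * ξ i ω))) μ :=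
        (hintx2e i l hl).sub ((hintxe i l hl).const_mul (2 * c))
      rw [hfe, integral_add hI1 ((hinte i l hl).const_mul (c ^ 2)),
        integral_sub (hintx2e i l hl) ((hintxe i l hl).const_mul (2 * c)),
        integral_const_mul, integral_const_mul]
    rw [hexp] at hnn
    have hE : (0:ℝ) < E := hE0 i
    have hkey : 0 ≤ Bb - A ^ 2 / E := by
      have hc2 : c ^ 2 * E = A ^ 2 / E := by
        rw [hcdef]; field_simp
      have hcA : 2 * c * A = 2 * (A ^ 2 / E) := by
        rw [hcdef]; field_simp
      rw [hc2, hcA] at hnn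
      linarith
    have : 0 ≤ (Bb - A ^ 2 / E) / E := div_nonneg hkey hE.le
    have heq2 : (Bb - A ^ 2 / E) / E = Bb / E - A ^ 2 / E ^ 2 := by
      field_simp
    linarith [heq2 ▸ this]
  constructor
  · -- lower bound
    rcases le_or_gt (1 - 2 * B * l) 0 with hneg | hpos
    · rw [max_eq_right hneg, zero_mul]
      exact Finset.sum_nonneg fun i _ => hcs i
    · rw [max_eq_left hpos.le]
      have hx : 0 ≤ B * l := by positivity
      have hx2 : B * l ≤ 1 / 2 := by nlinarith
      set x := B * l with hxdef
      set q := x + (3/5) * x^2 with hqdef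
      have hq0 : 0 ≤ q := by rw [hqdef]; nlinarith
      set D : ℝ := 1 + x^2/2 + (83/300) * x^3 with hDdef
      have hD0 : (0:ℝ) < D := by rw [hDdef]; nlinarith
      have hD1 : (1:ℝ) ≤ D := by rw [hDdef]; nlinarith
      -- E i ≤ D
      have hEup : ∀ i, ∫ ω, Real.exp (l * ξ i ω) ∂μ ≤ D := by
        intro i
        have hI1 : Integrable (fun ω => 1 + l * ξ i ω) μ :=
          (integrable_const 1).add ((hint i).const_mul l)
        have hI2 : Integrable (fun ω => 1 + l * ξ i ω + l^2/2 * (ξ i ω)^2) μ :=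
          hI1.add ((hint2 i).const_mul (l^2/2))
        have hint_rhs : Integrable (fun ω => 1 + l * ξ i ω + l^2/2 * (ξ i ω)^2
            + l^3 * B / 6 * ((ξ i ω)^2 * Real.exp (l * ξ i ω))) μ :=
          hI2.add ((hintx2e i l hl).const_mul (l^3 * B / 6))
        have h := integral_mono_ae (hinte i l hl) hint_rhs ?_
        · rw [integral_add hI2 ((hintx2e i l hl).const_mul (l^3 * B / 6)),
            integral_add hI1 ((hint2 i).const_mul (l^2/2)),
            integral_add (integrable_const 1) ((hint i).const_mul l),
            integral_const, probReal_univ, integral_const_mul, integral_const_mul,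
            integral_const_mul, hmean i] at h
          simp only [ENNReal.toReal_one, smul_eq_mul, one_mul, mul_zero, add_zero] at h
          -- h : E i ≤ 1 + l^2/2 * v + l^3*B/6 * Bb
          have h83 : Real.exp (B * l) ≤ 83/50 := aux_exp_le_83 hx hx2
          have hBb83 : ∫ ω, (ξ i ω) ^ 2 * Real.exp (l * ξ i ω) ∂μ ≤ 83/50 * B^2 := by
            calc ∫ ω, (ξ i ω) ^ 2 * Real.exp (l * ξ i ω) ∂μ
                ≤ Real.exp (B * l) * ∫ ω, (ξ i ω) ^ 2 ∂μ := hbe i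
              _ ≤ 83/50 * B^2 := by
                  nlinarith [hv0 i, hvB i, Real.exp_pos (B * l)]
          have hterm1 : l^2/2 * ∫ ω, (ξ i ω) ^ 2 ∂μ ≤ x^2/2 := by
            rw [hxdef]; nlinarith [hvB i, hv0 i, sq_nonneg l]
          have hterm2 : l^3 * B / 6 * ∫ ω, (ξ i ω) ^ 2 * Real.exp (l * ξ i ω) ∂μ
              ≤ (83/300) * x^3 := by
            have hl3 : 0 ≤ l^3 * B / 6 := by positivity
            calc l^3 * B / 6 * ∫ ω, (ξ i ω) ^ 2 * Real.exp (l * ξ i ω) ∂μ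
                ≤ l^3 * B / 6 * (83/50 * B^2) := mul_le_mul_of_nonneg_left hBb83 hl3
              _ = (83/300) * x^3 := by rw [hxdef]; ring
          rw [hDdef]
          linarith
        · filter_upwards [hbdd i] with ω hω
          calc Real.exp (l * ξ i ω)
              ≤ 1 + l * ξ i ω + (l * ξ i ω)^2/2
                + l^3 * B / 6 * ((ξ i ω)^2 * Real.exp (l * ξ i ω)) := aux_exp_taylor hB hl hω
            _ = 1 + l * ξ i ω + l^2/2 * (ξ i ω)^2
                + l^3 * B / 6 * ((ξ i ω)^2 * Real.exp (l * ξ i ω)) := by ring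
      -- A i ^ 2 ≤ q^2 * v i
      have ha2 : ∀ i, (∫ ω, ξ i ω * Real.exp (l * ξ i ω) ∂μ) ^ 2
          ≤ q^2 * ∫ ω, (ξ i ω) ^ 2 ∂μ := by
        intro i
        have hq : Real.exp (B * l) - 1 ≤ q := by
          rw [hqdef, hxdef]
          exact aux_exp_le_q hx hx2
        have hAq : ∫ ω, ξ i ω * Real.exp (l * ξ i ω) ∂μ
            ≤ q / B * ∫ ω, (ξ i ω) ^ 2 ∂μ := by
          refine le_trans (haK i) (mul_le_mul_of_nonneg_right ?_ (hv0 i))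
          exact (div_le_div_iff_of_pos_right hB).2 hq
        have hsq := pow_le_pow_left₀ (ha0 i) hAq 2
        have hv := hvB i
        have hv0' := hv0 i
        have hrw : (q / B * ∫ ω, (ξ i ω) ^ 2 ∂μ) ^ 2
            = q^2 * (∫ ω, (ξ i ω) ^ 2 ∂μ)^2 / B^2 := by
          field_simp
        rw [hrw] at hsq
        refine le_trans hsq ?_
        rw [div_le_iff₀ (by positivity : (0:ℝ) < B^2)]
        nlinarith [mul_le_mul_of_nonneg_left hv
          (mul_nonneg (sq_nonneg q) hv0'), sq_nonneg q]
      -- each summand lower bound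
      have hlow : ∀ i, (∫ ω, (ξ i ω) ^ 2 * Real.exp (l * ξ i ω) ∂μ) / D
            - q^2 * ∫ ω, (ξ i ω) ^ 2 ∂μ
          ≤ (∫ ω, (ξ i ω) ^ 2 * Real.exp (l * ξ i ω) ∂μ)
              / (∫ ω, Real.exp (l * ξ i ω) ∂μ)
            - (∫ ω, ξ i ω * Real.exp (l * ξ i ω) ∂μ) ^ 2
              / (∫ ω, Real.exp (l * ξ i ω) ∂μ) ^ 2 := by
        intro i
        have h1 : (∫ ω, (ξ i ω) ^ 2 * Real.exp (l * ξ i ω) ∂μ) / D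
            ≤ (∫ ω, (ξ i ω) ^ 2 * Real.exp (l * ξ i ω) ∂μ)
              / (∫ ω, Real.exp (l * ξ i ω) ∂μ) :=
          div_le_div_of_nonneg_left (hb0 i) (hE0 i) (hEup i)
        have hE2 : 1 ≤ (∫ ω, Real.exp (l * ξ i ω) ∂μ)^2 := by nlinarith [he1 i]
        have h2 : (∫ ω, ξ i ω * Real.exp (l * ξ i ω) ∂μ) ^ 2
              / (∫ ω, Real.exp (l * ξ i ω) ∂μ) ^ 2
            ≤ (∫ ω, ξ i ω * Real.exp (l * ξ i ω) ∂μ) ^ 2 :=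
          div_le_self (sq_nonneg _) hE2
        have h3 := h2.trans (ha2 i)
        linarith
      have hgoal_eq : 1 - 2 * B * l = 1 - 2 * x := by rw [hxdef]; ring
      rw [hgoal_eq]
      have hkey := aux_key_poly hx hx2
      rw [← hqdef, ← hDdef] at hkey
      have hcoeff : (1 - 2*x) + q^2 ≤ (1-x)/D := (le_div_iff₀ hD0).2 hkey
      have hsumb : (1 - x) * ∑ j, ∫ ω, (ξ j ω) ^ 2 ∂μ
          ≤ ∑ j, ∫ ω, (ξ j ω) ^ 2 * Real.exp (l * ξ j ω) ∂μ := by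
        rw [hxdef]
        exact hA l hl
      calc (1 - 2*x) * ∑ j, ∫ ω, (ξ j ω) ^ 2 ∂μ
          ≤ ((1-x)/D - q^2) * ∑ j, ∫ ω, (ξ j ω) ^ 2 ∂μ :=
            mul_le_mul_of_nonneg_right (by linarith) hV0
        _ = (1-x) * (∑ j, ∫ ω, (ξ j ω) ^ 2 ∂μ) / D
            - q^2 * ∑ j, ∫ ω, (ξ j ω) ^ 2 ∂μ := by ring
        _ ≤ (∑ j, ∫ ω, (ξ j ω) ^ 2 * Real.exp (l * ξ j ω) ∂μ) / D
            - q^2 * ∑ j, ∫ ω, (ξ j ω) ^ 2 ∂μ := by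
            have := (div_le_div_iff_of_pos_right hD0).2 hsumb
            linarith
        _ = ∑ j, ((∫ ω, (ξ j ω) ^ 2 * Real.exp (l * ξ j ω) ∂μ) / D
            - q^2 * ∫ ω, (ξ j ω) ^ 2 ∂μ) := by
            rw [Finset.sum_sub_distrib, Finset.sum_div, Finset.mul_sum]
        _ ≤ ∑ j, ((∫ ω, (ξ j ω) ^ 2 * Real.exp (l * ξ j ω) ∂μ)
              / (∫ ω, Real.exp (l * ξ j ω) ∂μ)
            - (∫ ω, ξ j ω * Real.exp (l * ξ j ω) ∂μ) ^ 2
              / (∫ ω, Real.exp (l * ξ j ω) ∂μ) ^ 2) :=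
            Finset.sum_le_sum fun j _ => hlow j
  · -- upper bound
    have hstep : ∀ i, (∫ ω, (ξ i ω) ^ 2 * Real.exp (l * ξ i ω) ∂μ)
          / (∫ ω, Real.exp (l * ξ i ω) ∂μ)
        - (∫ ω, ξ i ω * Real.exp (l * ξ i ω) ∂μ) ^ 2
          / (∫ ω, Real.exp (l * ξ i ω) ∂μ) ^ 2
        ≤ Real.exp (B * l) * ∫ ω, (ξ i ω) ^ 2 ∂μ := by
      intro i
      have h1 : (∫ ω, (ξ i ω) ^ 2 * Real.exp (l * ξ i ω) ∂μ)
          / (∫ ω, Real.exp (l * ξ i ω) ∂μ)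
          ≤ ∫ ω, (ξ i ω) ^ 2 * Real.exp (l * ξ i ω) ∂μ :=
        div_le_self (hb0 i) (he1 i)
      have h2 : 0 ≤ (∫ ω, ξ i ω * Real.exp (l * ξ i ω) ∂μ) ^ 2
          / (∫ ω, Real.exp (l * ξ i ω) ∂μ) ^ 2 := by positivity
      linarith [hbe i]
    calc (∑ i, ((∫ ω, (ξ i ω) ^ 2 * Real.exp (l * ξ i ω) ∂μ)
            / (∫ ω, Real.exp (l * ξ i ω) ∂μ)
          - (∫ ω, ξ i ω * Real.exp (l * ξ i ω) ∂μ) ^ 2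
            / (∫ ω, Real.exp (l * ξ i ω) ∂μ) ^ 2))
        ≤ ∑ i, Real.exp (B * l) * ∫ ω, (ξ i ω) ^ 2 ∂μ :=
          Finset.sum_le_sum fun i _ => hstep i
      _ = Real.exp (B * l) * ∑ i, ∫ ω, (ξ i ω) ^ 2 ∂μ := by rw [Finset.mul_sum]
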